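/- If Y ∈ ℝ^{K−1} is a nondegenerate Gaussian random vector (with positive definite covariance Ω) and J ⊂ {1,…,K} satisfies |J| < K−1, then almost surely the vector M·Π_Ω(Y + μ | L_J(Ω)) has exactly |J| zero coordinates, simultaneously for all μ in ℚ^{K−1} (where M = B₂Ω⁻¹). -/

import Mathlib

open Matrix MeasureTheory

section Aux

lemma quadAux (a b : ℝ) (hb : 0 ≤ b) (h : ∀ t : ℝ, 0 ≤ t^2 * b - 2*t*a) : a = 0 := by
  rcases eq_or_lt_of_le hb with hb0 | hb0
  · have := h a; nlinarith
  · have key := h (a / b)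
    have e : (a/b)^2 * b - 2*(a/b)*a = -(a^2/b) := by field_simp; ring
    rw [e] at key
    have h1 : a^2 / b ≤ 0 := by linarith
    have h2 : 0 ≤ a^2 / b := div_nonneg (sq_nonneg a) hb
    have h3 := le_antisymm h1 h2
    field_simp at h3
    simpa using h3

lemma nullLin (n : ℕ) (ℓ : (Fin n → ℝ) →ₗ[ℝ] ℝ) (hℓ : ℓ ≠ 0) (c : ℝ) :
    volume {v : Fin n → ℝ | ℓ v = c} = 0 := by
  obtain ⟨x, hx⟩ : ∃ x, ℓ x ≠ 0 := by
    by_contra h; push_neg at h; exact hℓ (LinearMap.ext fun x => by simp [h x])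
  set x₀ : Fin n → ℝ := (c / ℓ x) • x with hx₀
  have hℓx₀ : ℓ x₀ = c := by simp [hx₀, div_mul_cancel₀, hx]
  have hset : {v : Fin n → ℝ | ℓ v = c}
      = (fun v => v + (-x₀)) ⁻¹' (LinearMap.ker ℓ : Set (Fin n → ℝ)) := by
    ext v; simp [LinearMap.mem_ker, sub_eq_zero, hℓx₀, ← sub_eq_add_neg]
  rw [hset, measure_preimage_add_right]
  exact Measure.addHaar_submodule volume _ (fun htop => hℓ (LinearMap.ker_eq_top.mp htop))

lemma kerOne (n : ℕ) (B₂ : Matrix (Fin (n+1)) (Fin n) ℝ)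
    (horth : B₂ᵀ * B₂ = 1)
    (hone : B₂ᵀ *ᵥ (fun _ => (1:ℝ)) = 0) :
    LinearMap.ker (Matrix.mulVecLin B₂ᵀ) = Submodule.span ℝ {(fun _ => (1:ℝ) : Fin (n+1) → ℝ)} := by
  have hsurj : Function.Surjective (Matrix.mulVecLin B₂ᵀ) := by
    intro y
    refine ⟨B₂ *ᵥ y, ?_⟩
    rw [Matrix.mulVecLin_apply, Matrix.mulVec_mulVec, horth, Matrix.one_mulVec]
  have hrange : LinearMap.range (Matrix.mulVecLin B₂ᵀ) = ⊤ := LinearMap.range_eq_top.mpr hsurj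
  have hrn := LinearMap.finrank_range_add_finrank_ker (Matrix.mulVecLin B₂ᵀ)
  rw [hrange] at hrn
  have h1 : Module.finrank ℝ (⊤ : Submodule ℝ (Fin n → ℝ)) = n := by simp [finrank_top]
  have h2 : Module.finrank ℝ (Fin (n+1) → ℝ) = n + 1 := by simp
  have hker : Module.finrank ℝ (LinearMap.ker (Matrix.mulVecLin B₂ᵀ)) = 1 := by omega
  have hne : (fun _ => (1:ℝ) : Fin (n+1) → ℝ) ≠ 0 := by
    intro h; have := congrFun h 0; simp at this
  have hle : Submodule.span ℝ {(fun _ => (1:ℝ) : Fin (n+1) → ℝ)}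
      ≤ LinearMap.ker (Matrix.mulVecLin B₂ᵀ) := by
    rw [Submodule.span_le, Set.singleton_subset_iff]
    rw [SetLike.mem_coe, LinearMap.mem_ker, Matrix.mulVecLin_apply]
    exact hone
  exact (Submodule.eq_of_le_of_finrank_eq hle (by rw [hker, finrank_span_singleton hne])).symm

lemma existsSep (n : ℕ) (B₂ : Matrix (Fin (n+1)) (Fin n) ℝ)
    (horth : B₂ᵀ * B₂ = 1)
    (hone : B₂ᵀ *ᵥ (fun _ => (1:ℝ)) = 0)
    (J : Finset (Fin (n+1))) (hJ : J.card < n) (j : Fin (n+1)) (hj : j ∉ J) :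
    ∃ u : Fin n → ℝ, (∀ i ∈ J, (B₂ *ᵥ u) i = 0) ∧ (B₂ *ᵥ u) j ≠ 0 := by
  classical
  set r : Fin (n+1) → EuclideanSpace ℝ (Fin n) := fun i => WithLp.toLp 2 (fun k => B₂ i k) with hr
  set W : Submodule ℝ (EuclideanSpace ℝ (Fin n)) := Submodule.span ℝ (r '' ↑J) with hW
  have hrj : r j ∉ W := by
    intro hmem
    rw [hW, Finsupp.mem_span_image_iff_linearCombination] at hmem
    obtain ⟨l, hl, hlsum⟩ := hmem
    have hlsupp : ∀ i, i ∉ J → l i = 0 := by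
      intro i hi
      by_contra hne
      exact hi (hl (Finsupp.mem_support_iff.mpr hne))
    set d : Fin (n+1) → ℝ := (fun i => if i = j then (1:ℝ) else 0) - (fun i => l i) with hd
    have hdker : d ∈ LinearMap.ker (Matrix.mulVecLin B₂ᵀ) := by
      rw [LinearMap.mem_ker, Matrix.mulVecLin_apply]
      funext k
      have e1 : (B₂ᵀ *ᵥ d) k = ∑ i, B₂ᵀ k i * d i := rfl
      have e2 : ∑ i, B₂ᵀ k i * d i
          = (∑ i, B₂ᵀ k i * (if i = j then (1:ℝ) else 0)) - ∑ i, B₂ᵀ k i * l i := by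
        rw [← Finset.sum_sub_distrib]
        congr 1; funext i; simp only [hd, Pi.sub_apply]; split_ifs <;> ring
      have e3 : (∑ i, B₂ᵀ k i * (if i = j then (1:ℝ) else 0)) = B₂ j k := by
        simp [Finset.sum_ite_eq']
      have e4 : ∑ i, B₂ᵀ k i * l i = (Finsupp.linearCombination ℝ r l) k := by
        rw [Finsupp.linearCombination_apply, Finsupp.sum]
        rw [show ((∑ i ∈ l.support, l i • r i) k) = ∑ i ∈ l.support, l i * B₂ i k from by
          rw [WithLp.ofLp_sum, Finset.sum_apply]; rfl]
        rw [← Finset.sum_subset (Finset.subset_univ l.support)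
          (by intro i _ hi; simp [Finsupp.notMem_support_iff.mp hi])]
        congr 1; funext i; simp [Matrix.transpose_apply]; ring
      rw [e1, e2, e3, e4, hlsum]
      simp [hr]
    rw [kerOne n B₂ horth hone, Submodule.mem_span_singleton] at hdker
    obtain ⟨t, ht⟩ := hdker
    obtain ⟨j', hj'⟩ : ∃ j' : Fin (n+1), j' ∉ insert j J := by
      by_contra hc
      push_neg at hc
      have : (insert j J : Finset (Fin (n+1))) = Finset.univ := Finset.eq_univ_iff_forall.mpr hc
      have hcard := congrArg Finset.card this
      rw [Finset.card_univ] at hcard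
      have := Finset.card_insert_le j J
      simp at hcard
      omega
    have hj'ne : j' ≠ j := by
      intro h; exact hj' (h ▸ Finset.mem_insert_self j J)
    have hj'nJ : j' ∉ J := fun h => hj' (Finset.mem_insert_of_mem h)
    have hdj' : d j' = 0 := by
      simp [hd, hj'ne, hlsupp j' hj'nJ]
    have ht' : t = 0 := by
      have := congrFun ht j'
      simp [hdj'] at this
      exact this
    have hdj : d j = 1 := by
      simp [hd, hlsupp j hj]
    have := congrFun ht j
    rw [ht'] at this
    simp [hdj] at this
  have hmemW : ∀ i ∈ J, r i ∈ W := fun i hi => Submodule.subset_span ⟨i, hi, rfl⟩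
  by_contra hcon
  push_neg at hcon
  have : r j ∈ W := by
    rw [← Submodule.orthogonal_orthogonal W]
    intro u hu
    have h1 : ∀ i ∈ J, (B₂ *ᵥ u) i = 0 := by
      intro i hi
      have := hu (r i) (hmemW i hi)
      simpa [Matrix.mulVec, dotProduct, PiLp.inner_apply, hr, mul_comm] using this
    have h2 := hcon u h1
    simpa [Matrix.mulVec, dotProduct, PiLp.inner_apply, hr, mul_comm] using h2
  exact hrj this

end Aux

theorem stmt14 (n : ℕ) (hn : 2 ≤ n)
    (B₂ : Matrix (Fin (n+1)) (Fin n) ℝ)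
    (horth : B₂ᵀ * B₂ = 1)
    (hone : B₂ᵀ *ᵥ (fun _ => (1:ℝ)) = 0)
    (Ω : Matrix (Fin n) (Fin n) ℝ) (hΩ : Ω.PosDef)
    (J : Finset (Fin (n+1))) (hJ : J.card < n)
    {E : Type*} [MeasurableSpace E] (P : Measure E) [IsProbabilityMeasure P]
    (Y : E → Fin n → ℝ) (hY : Measurable Y)
    (hlaw : Measure.map Y P = volume.withDensity (fun v =>
        ENNReal.ofReal ((Real.sqrt ((2 * Real.pi) ^ n * Ω.det))⁻¹ *
          Real.exp (-(v ⬝ᵥ (Ω⁻¹ *ᵥ v)) / 2))))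
    (proj : (Fin n → ℝ) → Fin n → ℝ)
    (hproj : ∀ v : Fin n → ℝ,
        proj v ∈ {z : Fin n → ℝ | ∀ j ∈ J, ((B₂ * Ω⁻¹) *ᵥ z) j = 0} ∧
        ∀ z ∈ {z : Fin n → ℝ | ∀ j ∈ J, ((B₂ * Ω⁻¹) *ᵥ z) j = 0},
          (v - proj v) ⬝ᵥ (Ω⁻¹ *ᵥ (v - proj v)) ≤ (v - z) ⬝ᵥ (Ω⁻¹ *ᵥ (v - z))) :
    P {ω : E | ∀ μ : Fin n → ℚ,
        ({j : Fin (n+1) |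
            ((B₂ * Ω⁻¹) *ᵥ proj (Y ω + fun i => (μ i : ℝ))) j = 0}).ncard = J.card} = 1 := by
  classical
  have hdet : IsUnit Ω.det := isUnit_iff_ne_zero.mpr hΩ.det_pos.ne'
  have hinvmul : Ω⁻¹ * Ω = 1 := Matrix.nonsing_inv_mul Ω hdet
  have hsymmΩ : Ωᵀ = Ω := hΩ.1
  have hsymm : (Ω⁻¹)ᵀ = Ω⁻¹ := by rw [Matrix.transpose_nonsing_inv, hsymmΩ]
  have hpos : ∀ x : Fin n → ℝ, x ≠ 0 → 0 < x ⬝ᵥ (Ω⁻¹ *ᵥ x) := by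
    intro x hx
    simpa using hΩ.inv.re_dotProduct_pos hx
  have hnonneg : ∀ x : Fin n → ℝ, 0 ≤ x ⬝ᵥ (Ω⁻¹ *ᵥ x) := by
    intro x
    simpa using hΩ.inv.posSemidef.re_dotProduct_nonneg x
  have hswap : ∀ a b : Fin n → ℝ, a ⬝ᵥ (Ω⁻¹ *ᵥ b) = b ⬝ᵥ (Ω⁻¹ *ᵥ a) := by
    intro a b
    rw [Matrix.dotProduct_mulVec, ← Matrix.mulVec_transpose, hsymm, dotProduct_comm]
  set M : Matrix (Fin (n+1)) (Fin n) ℝ := B₂ * Ω⁻¹ with hM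
  set LJ : Set (Fin n → ℝ) := {z : Fin n → ℝ | ∀ i ∈ J, (M *ᵥ z) i = 0} with hLJ
  have hproj1 : ∀ v, proj v ∈ LJ := fun v => (hproj v).1
  -- orthogonality
  have horthog : ∀ v w, w ∈ LJ → (v - proj v) ⬝ᵥ (Ω⁻¹ *ᵥ w) = 0 := by
    intro v w hw
    refine quadAux _ (w ⬝ᵥ (Ω⁻¹ *ᵥ w)) (hnonneg w) ?_
    intro t
    have hz : proj v + t • w ∈ LJ := by
      intro i hi
      simp [Matrix.mulVec_add, Matrix.mulVec_smul, hproj1 v i hi, hw i hi]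
    have hle := (hproj v).2 _ hz
    have hv : v - (proj v + t • w) = (v - proj v) - t • w := by abel
    have hexp : (v - (proj v + t • w)) ⬝ᵥ (Ω⁻¹ *ᵥ (v - (proj v + t • w)))
        = (v - proj v) ⬝ᵥ (Ω⁻¹ *ᵥ (v - proj v))
          - t * ((v - proj v) ⬝ᵥ (Ω⁻¹ *ᵥ w)) - t * (w ⬝ᵥ (Ω⁻¹ *ᵥ (v - proj v)))
          + t^2 * (w ⬝ᵥ (Ω⁻¹ *ᵥ w)) := by
      rw [hv]
      simp only [Matrix.mulVec_sub, Matrix.mulVec_smul, dotProduct_sub,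
        sub_dotProduct, dotProduct_smul, smul_dotProduct, smul_eq_mul]
      ring
    rw [hexp, hswap w (v - proj v)] at hle
    linarith
  -- uniqueness
  have huniq : ∀ v z, z ∈ LJ → (∀ w ∈ LJ, (v - z) ⬝ᵥ (Ω⁻¹ *ᵥ w) = 0) → z = proj v := by
    intro v z hz hperp
    have hdiff : proj v - z ∈ LJ := by
      intro i hi
      simp [Matrix.mulVec_sub, hproj1 v i hi, hz i hi]
    have hzero : (proj v - z) ⬝ᵥ (Ω⁻¹ *ᵥ (proj v - z)) = 0 := by
      have h1 := hperp _ hdiff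
      have h2 := horthog v _ hdiff
      have e : (proj v - z) ⬝ᵥ (Ω⁻¹ *ᵥ (proj v - z))
          = (v - z) ⬝ᵥ (Ω⁻¹ *ᵥ (proj v - z)) - (v - proj v) ⬝ᵥ (Ω⁻¹ *ᵥ (proj v - z)) := by
        rw [← sub_dotProduct]; congr 1; abel
      rw [e, h1, h2, sub_zero]
    by_contra hne
    have : proj v - z ≠ 0 := fun h => hne (by rw [sub_eq_zero] at h; exact h.symm)
    exact absurd hzero (hpos _ this).ne'
  have hadd : ∀ v w, proj (v + w) = proj v + proj w := by
    intro v w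
    refine (huniq (v + w) _ ?_ ?_).symm
    · intro i hi
      simp [Matrix.mulVec_add, hproj1 v i hi, hproj1 w i hi]
    · intro x hx
      have : (v + w) - (proj v + proj w) = (v - proj v) + (w - proj w) := by abel
      rw [this, add_dotProduct, horthog v x hx, horthog w x hx, add_zero]
  have hsmul : ∀ (t : ℝ) v, proj (t • v) = t • proj v := by
    intro t v
    refine (huniq (t • v) _ ?_ ?_).symm
    · intro i hi
      simp [Matrix.mulVec_smul, hproj1 v i hi]
    · intro x hx
      have : t • v - t • proj v = t • (v - proj v) := by rw [smul_sub]
      rw [this, smul_dotProduct, horthog v x hx, smul_zero]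
  -- linear functionals
  set ℓ : Fin (n+1) → ((Fin n → ℝ) →ₗ[ℝ] ℝ) := fun j =>
    { toFun := fun v => (M *ᵥ proj v) j
      map_add' := fun v w => by
        show (M *ᵥ proj (v + w)) j = (M *ᵥ proj v) j + (M *ᵥ proj w) j
        rw [hadd v w]; simp [Matrix.mulVec_add]
      map_smul' := fun t v => by
        show (M *ᵥ proj (t • v)) j = (RingHom.id ℝ) t • (M *ᵥ proj v) j
        rw [hsmul t v]; simp [Matrix.mulVec_smul] } with hℓ
  have hℓapp : ∀ j v, ℓ j v = (M *ᵥ proj v) j := fun j v => rfl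
  have hℓne : ∀ j, j ∉ J → ℓ j ≠ 0 := by
    intro j hj
    obtain ⟨u, hu1, hu2⟩ := existsSep n B₂ horth hone J hJ j hj
    set v : Fin n → ℝ := Ω *ᵥ u with hv
    have hMv : M *ᵥ v = B₂ *ᵥ u := by
      rw [hv, Matrix.mulVec_mulVec, hM, Matrix.mul_assoc, hinvmul, Matrix.mul_one]
    have hvLJ : v ∈ LJ := by
      intro i hi; rw [hMv]; exact hu1 i hi
    have hfix : proj v = v := by
      refine (huniq v v hvLJ ?_).symm
      intro w hw; simp
    intro h0
    apply hu2
    have : ℓ j v = 0 := by rw [h0]; rfl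
    rw [hℓapp, hfix, hMv] at this
    exact this
  -- the bad set
  set Bad : Set (Fin n → ℝ) :=
    ⋃ (j : Fin (n+1)) (_ : j ∉ J) (μ : Fin n → ℚ),
      (ℓ j) ⁻¹' {-(ℓ j (fun i => (μ i : ℝ)))} with hBad
  have hmeasBad : MeasurableSet Bad := by
    refine MeasurableSet.iUnion fun j => MeasurableSet.iUnion fun hj =>
      MeasurableSet.iUnion fun μ => ?_
    exact ((ℓ j).continuous_of_finiteDimensional.measurable) (measurableSet_singleton _)
  have hvolBad : volume Bad = 0 := by
    refine measure_iUnion_null fun j => measure_iUnion_null fun hj =>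
      measure_iUnion_null fun μ => ?_
    exact nullLin n (ℓ j) (hℓne j hj) _
  have hP0 : P (Y ⁻¹' Bad) = 0 := by
    rw [← Measure.map_apply hY hmeasBad, hlaw]
    exact (withDensity_absolutelyContinuous _ _) hvolBad
  have hsub : (Y ⁻¹' Bad)ᶜ ⊆ {ω : E | ∀ μ : Fin n → ℚ,
      ({j : Fin (n+1) | (M *ᵥ proj (Y ω + fun i => (μ i : ℝ))) j = 0}).ncard = J.card} := by
    intro ω hω μ
    have hset : {j : Fin (n+1) | (M *ᵥ proj (Y ω + fun i => (μ i : ℝ))) j = 0} = ↑J := by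
      ext j
      simp only [Set.mem_setOf_eq, Finset.mem_coe]
      constructor
      · intro h0
        by_contra hj
        apply hω
        refine Set.mem_iUnion.mpr ⟨j, Set.mem_iUnion.mpr ⟨hj, Set.mem_iUnion.mpr ⟨μ, ?_⟩⟩⟩
        have hsumz : ℓ j (Y ω) + ℓ j (fun i => (μ i : ℝ)) = 0 := by
          rw [← map_add]; exact h0
        simp only [Set.mem_preimage, Set.mem_singleton_iff]
        linarith
      · intro hj
        exact hproj1 _ j hj
    rw [hset, Set.ncard_coe_finset]
  have h1 : P ((Y ⁻¹' Bad)ᶜ) = 1 := by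
    rw [measure_compl (hY hmeasBad) (measure_ne_top P _), hP0, measure_univ, tsub_zero]
  refine le_antisymm prob_le_one ?_
  calc (1:ENNReal) = P ((Y ⁻¹' Bad)ᶜ) := h1.symm
    _ ≤ _ := measure_mono hsub
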